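/- Let (g,J) be a quasi-Kähler Chern-flat Lie algebra whose center has complex dimension 1. Then the complex dimension of g is odd. -/

import Mathlib

open Module

theorem alt_nondeg_even_finrank {V : Type*} [AddCommGroup V] [Module ℂ V]
    [FiniteDimensional ℂ V] (B : V →ₗ[ℂ] V →ₗ[ℂ] ℂ)
    (halt : ∀ x, B x x = 0)
    (hnd : ∀ x, (∀ y, B x y = 0) → x = 0) :
    Even (Module.finrank ℂ V) := by
  have hskew : ∀ x y, B x y = - B y x := by
    intro x y
    have h := halt (x + y)
    simp only [map_add, LinearMap.add_apply, halt] at h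
    linear_combination h
  by_contra hodd
  rw [Nat.not_even_iff_odd] at hodd
  set m := Module.finrank ℂ V with hm
  let b := Module.finBasis ℂ V
  set M : Matrix (Fin m) (Fin m) ℂ := Matrix.of fun i j => B (b i) (b j) with hM
  have hMT : M.transpose = -M := by
    ext i j
    simp [hM, Matrix.transpose_apply, hskew (b j) (b i)]
  have hdet : M.det = 0 := by
    have h1 : M.det = (-M).det := by rw [← hMT, Matrix.det_transpose]
    rw [Matrix.det_neg, Fintype.card_fin, hodd.neg_one_pow] at h1
    linear_combination h1 / 2
  obtain ⟨v, hv0, hv⟩ := Matrix.exists_vecMul_eq_zero_iff.mpr hdet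
  set x : V := ∑ j, v j • b j with hx
  have hBx : ∀ y, B x y = 0 := by
    have hb : ∀ i, B x (b i) = 0 := by
      intro i
      have h3 := congrFun hv i
      simp only [Matrix.vecMul, dotProduct, Pi.zero_apply] at h3
      simp only [hx, map_sum, map_smul, LinearMap.sum_apply, LinearMap.smul_apply]
      rw [← h3]
      simp [hM, mul_comm]
    intro y
    have hB0 : B x = 0 := b.ext hb
    simp [hB0]
  have hx0 : x = 0 := hnd x hBx
  apply hv0
  funext i
  have h2 : b.repr x i = v i := by
    simp [hx, Finsupp.single_apply]
  rw [hx0] at h2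
  simpa using h2.symm

theorem qkcf_center_dim_one_odd (g : Type*) [LieRing g] [LieAlgebra ℝ g]
    [FiniteDimensional ℝ g] (n : ℕ)
    (J : g →ₗ[ℝ] g) (hJ : ∀ X : g, J (J X) = -X)
    (h1 : ∀ X Y : g, J ⁅X, Y⁆ = -⁅J X, Y⁆)
    (h2 : ∀ X Y : g, J ⁅X, Y⁆ = -⁅X, J Y⁆)
    (hdim : Module.finrank ℝ g = 2 * n)
    (hcen : Module.finrank ℝ (LieAlgebra.center ℝ g : LieIdeal ℝ g) = 2) :
    Odd n := by
  classical
  have h1' : ∀ X Y : g, ⁅J X, Y⁆ = -J ⁅X, Y⁆ := fun X Y => by rw [h1, neg_neg]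
  have h2' : ∀ X Y : g, ⁅X, J Y⁆ = -J ⁅X, Y⁆ := fun X Y => by rw [h2, neg_neg]
  have hJinj : ∀ x : g, J x = 0 → x = 0 := by
    intro x hx
    have h := hJ x
    rw [hx, map_zero] at h
    simpa using h.symm
  -- 2-step nilpotency
  have hstep : ∀ X Y Z : g, ⁅⁅X, Y⁆, Z⁆ = 0 := by
    intro X Y Z
    have e1 : ⁅⁅X, Y⁆, J Z⁆ = -J ⁅⁅X, Y⁆, Z⁆ := h2' _ _
    have e2 : ⁅⁅X, Y⁆, J Z⁆ = J ⁅⁅X, Y⁆, Z⁆ := by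
      calc ⁅⁅X, Y⁆, J Z⁆ = ⁅X, ⁅Y, J Z⁆⁆ - ⁅Y, ⁅X, J Z⁆⁆ := lie_lie X Y (J Z)
        _ = J ⁅X, ⁅Y, Z⁆⁆ - J ⁅Y, ⁅X, Z⁆⁆ := by
            rw [h2' Y Z, h2' X Z, lie_neg, lie_neg, h2' X, h2' Y, neg_neg, neg_neg]
        _ = J ⁅⁅X, Y⁆, Z⁆ := by rw [← map_sub, ← lie_lie]
    have e3 : J ⁅⁅X, Y⁆, Z⁆ = 0 := by
      have h4 : (2 : ℝ) • J ⁅⁅X, Y⁆, Z⁆ = 0 := by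
        rw [two_smul]
        nth_rewrite 1 [← e2]
        rw [e1, neg_add_cancel]
      have := smul_eq_zero.mp h4
      simpa using this
    exact hJinj _ e3
  have hcmem : ∀ m : g, m ∈ LieAlgebra.center ℝ g ↔ ∀ x : g, ⁅x, m⁆ = 0 := fun m =>
    LieModule.mem_maxTrivSubmodule ℝ g g m
  have hbz : ∀ X Y : g, ⁅X, Y⁆ ∈ LieAlgebra.center ℝ g := by
    intro X Y
    rw [hcmem]
    intro x
    rw [← lie_skew, hstep, neg_zero]
  by_cases habel : ∀ X Y : g, ⁅X, Y⁆ = 0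
  · -- abelian case : center = everything, so 2n = 2, n = 1
    have hctop : LieAlgebra.center ℝ g = ⊤ := by
      rw [eq_top_iff]
      intro m _
      exact (hcmem m).mpr fun x => habel x m
    have hfr : Module.finrank ℝ (LieAlgebra.center ℝ g : LieIdeal ℝ g) = Module.finrank ℝ g := by
      rw [hctop]
      exact LinearEquiv.finrank_eq (LieIdeal.topEquiv : (⊤ : LieIdeal ℝ g) ≃ₗ⁅ℝ⁆ g).toLinearEquiv
    rw [hcen] at hfr
    have : n = 1 := by omega
    simp [this]
  · push_neg at habel
    obtain ⟨X₀, Y₀, hz0⟩ := habel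
    set z₀ := ⁅X₀, Y₀⁆ with hz₀def
    have hz0c : z₀ ∈ LieAlgebra.center ℝ g := hbz _ _
    have hJz0c : J z₀ ∈ LieAlgebra.center ℝ g := by
      rw [hcmem]
      intro x
      rw [h2' x z₀]  -- wrong direction; fix: ⁅x, J z₀⁆ = -J ⁅x, z₀⁆
      rw [(hcmem z₀).mp hz0c x, map_zero, neg_zero]
    classical
    letI smulC : SMul ℂ g := ⟨fun c x => c.re • x + c.im • J x⟩
    have hsm : ∀ (c : ℂ) (x : g), c • x = c.re • x + c.im • J x := fun _ _ => rfl
    letI mulAct : MulAction ℂ g :=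
      { one_smul := fun x => by simp [hsm]
        mul_smul := fun c d x => by
          simp only [hsm, map_add, map_smul, hJ, Complex.mul_re, Complex.mul_im, smul_add,
            smul_smul, smul_neg, sub_smul, add_smul]
          module }
    letI distribAct : DistribMulAction ℂ g :=
      { smul_zero := fun c => by simp [hsm]
        smul_add := fun c x y => by
          simp only [hsm, map_add, smul_add]
          module }
    letI modC : Module ℂ g :=
      { add_smul := fun c d x => by
          simp only [hsm, Complex.add_re, Complex.add_im, add_smul]
          module
        zero_smul := fun x => by simp [hsm] }
    letI tower : IsScalarTower ℝ ℂ g :=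
      ⟨fun r c x => by
        simp only [hsm, Complex.smul_re, Complex.smul_im, smul_add, smul_smul, smul_eq_mul]⟩
    haveI : FiniteDimensional ℂ g := Module.Finite.of_restrictScalars_finite ℝ ℂ g
    have hrankc : Module.finrank ℂ g = n := by
      have h := Module.finrank_mul_finrank ℝ ℂ g
      rw [Complex.finrank_real_complex, hdim] at h
      omega
    have hst : ∀ (s t : ℝ) (x : g), s • x + t • J x = ((s + t * Complex.I) : ℂ) • x := by
      intro s t x; rw [hsm]; simp
    -- z₀, J z₀ span the center
    have hli : LinearIndependent ℝ ![z₀, J z₀] := by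
      rw [LinearIndependent.pair_iff]
      intro s t hst0
      rw [hst] at hst0
      rcases smul_eq_zero.mp hst0 with hc | hx
      · rw [Complex.ext_iff] at hc
        simpa using hc
      · exact absurd hx hz0
    have hcen' : Module.finrank ℝ (LieAlgebra.center ℝ g : LieIdeal ℝ g).toSubmodule = 2 :=
      hcen
    have hspan : Submodule.span ℝ (Set.range ![z₀, J z₀]) =
        (LieAlgebra.center ℝ g : LieIdeal ℝ g).toSubmodule := by
      apply Submodule.eq_of_le_of_finrank_le
      · rw [Submodule.span_le]
        rintro x ⟨i, rfl⟩
        fin_cases i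
        · exact hz0c
        · exact hJz0c
      · rw [hcen']
        rw [finrank_span_eq_card hli]
        simp
    have hcen_char : ∀ w : g, w ∈ LieAlgebra.center ℝ g → ∃ c : ℂ, w = c • z₀ := by
      intro w hw
      have hw' : w ∈ Submodule.span ℝ (Set.range ![z₀, J z₀]) := by rw [hspan]; exact hw
      rw [Submodule.mem_span_range_iff_exists_fun] at hw'
      obtain ⟨c, hc⟩ := hw'
      refine ⟨c 0 + c 1 * Complex.I, ?_⟩
      rw [← hst]
      rw [← hc]
      simp [Fin.sum_univ_two]
    -- a ℂ-linear functional with f z₀ = 1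
    obtain ⟨f, hf⟩ := (LinearMap.toSpanSingleton ℂ g z₀).exists_leftInverse_of_injective
      (LinearMap.ker_toSpanSingleton ℂ hz0)
    have hfz₀ : f z₀ = 1 := by
      calc f z₀ = f (LinearMap.toSpanSingleton ℂ g z₀ 1) := by
            rw [LinearMap.toSpanSingleton_apply_one]
        _ = 1 := by rw [← LinearMap.comp_apply, hf]; rfl
    have hkey : ∀ w : g, w ∈ LieAlgebra.center ℝ g → w = f w • z₀ := by
      intro w hw
      obtain ⟨c, rfl⟩ := hcen_char w hw
      rw [map_smul, smul_eq_mul, hfz₀, mul_one]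
    -- conjugate-linearity of the bracket
    have hconj_re : ∀ c : ℂ, (starRingEnd ℂ c).re = c.re := fun c => rfl
    have hlie₁ : ∀ (c : ℂ) (X Y : g), ⁅c • X, Y⁆ = (starRingEnd ℂ c) • ⁅X, Y⁆ := by
      intro c X Y
      rw [hsm c X, add_lie, smul_lie, smul_lie, h1' X Y, hsm (starRingEnd ℂ c)]
      simp only [Complex.conj_re, Complex.conj_im, smul_neg, neg_smul]
    have hlie₂ : ∀ (c : ℂ) (X Y : g), ⁅X, c • Y⁆ = (starRingEnd ℂ c) • ⁅X, Y⁆ := by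
      intro c X Y
      rw [hsm c Y, lie_add, lie_smul, lie_smul, h2' X Y, hsm (starRingEnd ℂ c)]
      simp only [Complex.conj_re, Complex.conj_im, smul_neg, neg_smul]
    -- the ℂ-bilinear alternating form
    let B : g →ₗ[ℂ] g →ₗ[ℂ] ℂ := LinearMap.mk₂ ℂ (fun X Y => starRingEnd ℂ (f ⁅X, Y⁆))
      (fun X X' Y => by rw [add_lie, map_add, map_add])
      (fun c X Y => by
        rw [hlie₁, map_smul, smul_eq_mul, map_mul, Complex.conj_conj, smul_eq_mul])
      (fun X Y Y' => by rw [lie_add, map_add, map_add])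
      (fun c X Y => by
        rw [hlie₂, map_smul, smul_eq_mul, map_mul, Complex.conj_conj, smul_eq_mul])
    have hBapp : ∀ X Y : g, B X Y = starRingEnd ℂ (f ⁅X, Y⁆) := fun _ _ => rfl
    have halt : ∀ X : g, B X X = 0 := fun X => by
      rw [hBapp, lie_self, map_zero, map_zero]
    have hskewB : ∀ X Y : g, B X Y = -B Y X := by
      intro X Y
      rw [hBapp, hBapp, ← lie_skew X Y, map_neg, map_neg]
    have hBzero : ∀ X : g, B X = 0 ↔ X ∈ LieAlgebra.center ℝ g := by
      intro X
      constructor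
      · intro h
        rw [hcmem]
        intro y
        have h8 : f ⁅X, y⁆ = 0 := by
          have h9 : B X y = 0 := by rw [h]; rfl
          rw [hBapp] at h9
          exact star_eq_zero.mp h9
        have h7 : ⁅X, y⁆ = 0 := by
          rw [hkey ⁅X, y⁆ (hbz X y), h8, zero_smul]
        rw [← lie_skew, h7, neg_zero]
      · intro h
        ext y
        rw [hBapp]
        have h7 : ⁅X, y⁆ = 0 := by
          rw [← neg_neg ⁅X, y⁆, lie_skew, (hcmem X).mp h y, neg_zero]
        rw [h7, map_zero, map_zero]
        rfl
    -- the kernel of B is the ℂ-span of z₀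
    set N := LinearMap.ker B with hN
    have hNeq : N = (ℂ ∙ z₀) := by
      ext x
      rw [LinearMap.mem_ker, hBzero, Submodule.mem_span_singleton]
      constructor
      · intro hx
        obtain ⟨c, hc⟩ := hcen_char x hx
        exact ⟨c, hc.symm⟩
      · rintro ⟨c, rfl⟩
        rw [hcmem]
        intro x
        rw [hsm, lie_add, lie_smul, lie_smul, (hcmem z₀).mp hz0c x, (hcmem (J z₀)).mp hJz0c x,
          smul_zero, smul_zero, add_zero]
    have hNfr : finrank ℂ N = 1 := by
      rw [hNeq]
      exact finrank_span_singleton hz0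
    obtain ⟨W, hW⟩ := Submodule.exists_isCompl N
    have h9 := Submodule.finrank_add_eq_of_isCompl hW
    rw [hNfr, hrankc] at h9
    -- the restriction of B to W is alternating and nondegenerate
    let B' : W →ₗ[ℂ] W →ₗ[ℂ] ℂ := B.compl₁₂ W.subtype W.subtype
    have heven : Even (finrank ℂ W) := by
      apply alt_nondeg_even_finrank B' (fun w => halt w)
      intro w hw
      have hBw : (w : g) ∈ N := by
        rw [hN, LinearMap.mem_ker]
        ext y
        have hy : y ∈ N ⊔ W := by rw [hW.sup_eq_top]; trivial
        obtain ⟨u, hu, v, hv, rfl⟩ := Submodule.mem_sup.mp hy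
        have hu0 : B (w : g) u = 0 := by
          rw [hskewB]
          rw [hN, LinearMap.mem_ker] at hu
          rw [hu]
          simp
        have hv0 : B (w : g) v = 0 := hw ⟨v, hv⟩
        rw [map_add, hu0, hv0, add_zero]
        rfl
      have hmem : (w : g) ∈ N ⊓ W := ⟨hBw, w.2⟩
      rw [hW.inf_eq_bot, Submodule.mem_bot] at hmem
      exact Subtype.ext hmem
    rw [show finrank ℂ W = n - 1 by omega] at heven
    obtain ⟨k, hk⟩ := heven
    have hn1 : 1 ≤ n := by omega
    exact ⟨k, by omega⟩
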